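/- Let P and Q be probability measures on a measurable space and A a measurable event. Then P(A) + Q(Aᶜ) ≥ (1/2)·exp(−KL(P, Q)), where KL(P,Q) denotes the Kullback–Leibler divergence of P with respect to Q. -/

import Mathlib

open MeasureTheory Real
open scoped ENNReal

/-- The Kullback–Leibler divergence of `P` with respect to `Q`, valued in `EReal`:
`∫ log(dP/dQ) dP` when `P ≪ Q` and the log-likelihood ratio is integrable,
and `+∞` otherwise. -/
noncomputable def klDiv {α : Type*} [MeasurableSpace α] (P Q : Measure α) : EReal :=
  open Classical in
  if P ≪ Q ∧ Integrable (llr P Q) P then ((∫ x, llr P Q x ∂P : ℝ) : EReal) else ⊤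

lemma bh_mul_exp_eq_sqrt {a : ℝ} (ha : 0 ≤ a) :
    a * Real.exp (-Real.log a / 2) = Real.sqrt a := by
  rcases eq_or_lt_of_le ha with h | h
  · simp [← h]
  · rw [Real.sqrt_eq_rpow, show -Real.log a / 2 = Real.log a * (-(1/2) : ℝ) by ring,
      Real.exp_mul, Real.exp_log h]
    nth_rewrite 1 [← Real.rpow_one a]
    rw [← Real.rpow_add h]
    norm_num

lemma bh_sqrt_le {a : ℝ≥0∞} : a ^ (1/2 : ℝ) ≤ a + 1 := by
  rcases le_total a 1 with h | h
  · calc a ^ (1/2 : ℝ) ≤ 1 ^ (1/2 : ℝ) := ENNReal.rpow_le_rpow h (by norm_num)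
    _ = 1 := ENNReal.one_rpow _
    _ ≤ a + 1 := le_add_self
  · calc a ^ (1/2 : ℝ) ≤ a ^ (1 : ℝ) :=
        ENNReal.rpow_le_rpow_of_exponent_le h (by norm_num)
    _ = a := ENNReal.rpow_one a
    _ ≤ a + 1 := le_self_add

/-- Bretagnolle–Huber inequality: for probability measures `P, Q` and a measurable
event `A`, `P(A) + Q(Aᶜ) ≥ (1/2) exp(-KL(P, Q))`. -/
theorem bretagnolle_huber {α : Type*} [MeasurableSpace α] (P Q : Measure α)
    [IsProbabilityMeasure P] [IsProbabilityMeasure Q] {A : Set α}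
    (hA : MeasurableSet A) :
    2⁻¹ * EReal.exp (-(klDiv P Q)) ≤ P A + Q Aᶜ := by
  rw [klDiv]
  split_ifs with h
  · obtain ⟨hPQ, hint⟩ := h
    set K : ℝ := ∫ x, llr P Q x ∂P with hK
    set p : α → ℝ≥0∞ := P.rnDeriv Q with hp
    have hpm : Measurable p := Measure.measurable_rnDeriv P Q
    set B' : ℝ≥0∞ := ∫⁻ x, p x ^ (1/2 : ℝ) ∂Q with hB'
    have hp_int : ∫⁻ x, p x ∂Q = 1 := by
      rw [hp, Measure.lintegral_rnDeriv hPQ, measure_univ]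
    have hB'_le : B' ≤ 2 := by
      calc B' ≤ ∫⁻ x, (p x + 1) ∂Q := lintegral_mono fun x => bh_sqrt_le
      _ = 1 + 1 := by
          rw [lintegral_add_right _ measurable_const, hp_int, lintegral_one, measure_univ]
      _ = 2 := by norm_num
    have hB'_ne : B' ≠ ⊤ := (hB'_le.trans_lt (by norm_num)).ne
    -- Cauchy-Schwarz step: B'^2 ≤ 2 * (P A + Q Aᶜ)
    have hCS : B' ^ 2 ≤ 2 * (P A + Q Aᶜ) := by
      have hsplit : ∀ x, p x ^ (1/2 : ℝ)
          = (min (p x) 1) ^ (1/2 : ℝ) * (max (p x) 1) ^ (1/2 : ℝ) := by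
        intro x
        rw [← ENNReal.mul_rpow_of_nonneg _ _ (by norm_num : (0:ℝ) ≤ 1/2)]
        congr 1
        rw [show min (p x) 1 * max (p x) 1 = p x * 1 from min_mul_max (p x) 1, mul_one]
      have hholder :
          ∫⁻ x, (min (p x) 1) ^ (1/2 : ℝ) * (max (p x) 1) ^ (1/2 : ℝ) ∂Q
            ≤ (∫⁻ x, min (p x) 1 ∂Q) ^ (1/2 : ℝ) * (∫⁻ x, max (p x) 1 ∂Q) ^ (1/2 : ℝ) := by
        have h22 : (2:ℝ).HolderConjugate 2 := by constructor <;> norm_num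
        have := ENNReal.lintegral_mul_le_Lp_mul_Lq Q h22
          (f := fun x => (min (p x) 1) ^ (1/2 : ℝ)) (g := fun x => (max (p x) 1) ^ (1/2 : ℝ))
          ((hpm.min measurable_const).pow_const _).aemeasurable
          ((hpm.max measurable_const).pow_const _).aemeasurable
        simp only [Pi.mul_apply, ← ENNReal.rpow_mul] at this
        norm_num at this
        exact this
      have hmin : ∫⁻ x, min (p x) 1 ∂Q ≤ P A + Q Aᶜ := by
        rw [← lintegral_add_compl (fun x => min (p x) 1) hA]
        gcongr
        · calc ∫⁻ x in A, min (p x) 1 ∂Q ≤ ∫⁻ x in A, p x ∂Q :=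
            lintegral_mono fun x => min_le_left _ _
          _ = P A := Measure.setLIntegral_rnDeriv hPQ A
        · calc ∫⁻ x in Aᶜ, min (p x) 1 ∂Q ≤ ∫⁻ _ in Aᶜ, 1 ∂Q :=
            lintegral_mono fun x => min_le_right _ _
          _ = Q Aᶜ := by simp
      have hmax : ∫⁻ x, max (p x) 1 ∂Q ≤ 2 := by
        calc ∫⁻ x, max (p x) 1 ∂Q ≤ ∫⁻ x, (p x + 1) ∂Q :=
          lintegral_mono fun x => max_le le_self_add le_add_self
        _ = 1 + 1 := by
            rw [lintegral_add_right _ measurable_const, hp_int, lintegral_one, measure_univ]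
        _ = 2 := by norm_num
      calc B' ^ 2 = (∫⁻ x, (min (p x) 1) ^ (1/2 : ℝ) * (max (p x) 1) ^ (1/2 : ℝ) ∂Q) ^ 2 := by
            rw [hB']; congr 1; exact lintegral_congr fun x => hsplit x
      _ ≤ ((∫⁻ x, min (p x) 1 ∂Q) ^ (1/2 : ℝ) * (∫⁻ x, max (p x) 1 ∂Q) ^ (1/2 : ℝ)) ^ 2 := by
            gcongr
      _ = (∫⁻ x, min (p x) 1 ∂Q) * (∫⁻ x, max (p x) 1 ∂Q) := by
            rw [mul_pow, ← ENNReal.rpow_natCast ((∫⁻ x, min (p x) 1 ∂Q) ^ (1/2 : ℝ)),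
              ← ENNReal.rpow_natCast ((∫⁻ x, max (p x) 1 ∂Q) ^ (1/2 : ℝ)),
              ← ENNReal.rpow_mul, ← ENNReal.rpow_mul]
            norm_num
      _ ≤ (P A + Q Aᶜ) * 2 := by gcongr
      _ = 2 * (P A + Q Aᶜ) := mul_comm _ _
    -- pointwise identity
    have hpt : ∀ x, (p x).toReal • Real.exp (-llr P Q x / 2) = Real.sqrt ((p x).toReal) := by
      intro x
      rw [smul_eq_mul]
      simp only [llr_def, hp]
      exact bh_mul_exp_eq_sqrt ENNReal.toReal_nonneg
    -- integrability of √(dP/dQ) w.r.t. Q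
    have hsq_int : Integrable (fun x => Real.sqrt ((p x).toReal)) Q := by
      refine Integrable.mono' (g := fun x => 1 + (p x).toReal)
        ((integrable_const 1).add Measure.integrable_toReal_rnDeriv)
        (Real.continuous_sqrt.measurable.comp hpm.ennreal_toReal).aestronglyMeasurable
        (Filter.Eventually.of_forall fun x => ?_)
      have hb : Real.sqrt ((p x).toReal) ≤ 1 + (p x).toReal := by
        nlinarith [Real.sq_sqrt (ENNReal.toReal_nonneg : (0:ℝ) ≤ (p x).toReal),
          Real.sqrt_nonneg ((p x).toReal), sq_nonneg (Real.sqrt ((p x).toReal) - 1)]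
      simpa [Real.norm_eq_abs, abs_of_nonneg (Real.sqrt_nonneg _)] using hb
    -- integrability of exp(-llr/2) w.r.t. P
    have hexp_int : Integrable (fun x => Real.exp (-llr P Q x / 2)) P := by
      have heq : (fun x => (p x).toReal • Real.exp (-llr P Q x / 2))
          = fun x => Real.sqrt ((p x).toReal) := funext hpt
      rw [← integrable_rnDeriv_smul_iff hPQ, ← hp, heq]
      exact hsq_int
    -- Jensen
    have hJensen : Real.exp (-K / 2) ≤ ∫ x, Real.exp (-llr P Q x / 2) ∂P := by
      have hfi : Integrable (fun x => -llr P Q x / 2) P := (hint.neg).div_const 2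
      have := convexOn_exp.map_integral_le Real.continuous_exp.continuousOn isClosed_univ
        (Filter.Eventually.of_forall fun x => Set.mem_univ _) hfi
        (by exact hexp_int)
      rwa [integral_div, integral_neg, ← hK] at this
    -- change of variables
    have hint_eq : ∫ x, Real.exp (-llr P Q x / 2) ∂P = ∫ x, Real.sqrt ((p x).toReal) ∂Q := by
      rw [← integral_rnDeriv_smul hPQ (f := fun x => Real.exp (-llr P Q x / 2)), ← hp]
      exact integral_congr_ae (Filter.Eventually.of_forall hpt)
    -- identify B'
    have hBeq : ∫ x, Real.sqrt ((p x).toReal) ∂Q = B'.toReal := by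
      rw [show (fun x => Real.sqrt ((p x).toReal)) = fun x => (p x ^ (1/2 : ℝ)).toReal from
        funext fun x => by rw [Real.sqrt_eq_rpow, ENNReal.toReal_rpow]]
      exact integral_toReal ((hpm.pow_const _).aemeasurable)
        ((Measure.rnDeriv_lt_top P Q).mono fun x hx =>
          ENNReal.rpow_lt_top_of_nonneg (by norm_num) hx.ne)
    have hkey : ENNReal.ofReal (Real.exp (-K / 2)) ≤ B' :=
      ENNReal.ofReal_le_of_le_toReal (by rw [← hBeq, ← hint_eq]; exact hJensen)
    have hfinal : ENNReal.ofReal (Real.exp (-K)) ≤ 2 * (P A + Q Aᶜ) := by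
      have hexpK : Real.exp (-K) = Real.exp (-K / 2) ^ 2 := by
        rw [sq, ← Real.exp_add]; ring_nf
      calc ENNReal.ofReal (Real.exp (-K)) = ENNReal.ofReal (Real.exp (-K / 2)) ^ 2 := by
            rw [hexpK, ENNReal.ofReal_pow (Real.exp_nonneg _)]
      _ ≤ B' ^ 2 := by gcongr
      _ ≤ 2 * (P A + Q Aᶜ) := hCS
    rw [show -((K : ℝ) : EReal) = ((-K : ℝ) : EReal) by rw [EReal.coe_neg], EReal.exp_coe]
    calc (2⁻¹ : ℝ≥0∞) * ENNReal.ofReal (Real.exp (-K)) ≤ 2⁻¹ * (2 * (P A + Q Aᶜ)) := by gcongr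
    _ = P A + Q Aᶜ := by
        rw [← mul_assoc, ENNReal.inv_mul_cancel two_ne_zero ENNReal.ofNat_ne_top, one_mul]
  · rw [EReal.neg_top]
    simp
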